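/- In the synchronous delay/relay ring protocol, the total number of tokens Σᵢ (rᵢ + qᵢ) is invariant under execution of one global round. -/
import Mathlib


/-- Global state of the delay/relay ring protocol. -/
structure St (n : ℕ) where
  r : ZMod n → ℕ
  q : ZMod n → ℕ
  c : ZMod n → ℕ

/-- Release condition of process `i`: a delay process (member of `D`) releases
when its counter is `0` and it has a token; a relay process releases whenever
it has a token (counting the token arriving from the predecessor). -/
def rel {n : ℕ} (D : Finset (ZMod n)) (σ : St n) (i : ZMod n) : Prop :=
  if i ∈ D then σ.c i = 0 ∧ 0 < σ.r i + σ.q (i - 1)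
  else 0 < σ.r i + σ.q (i - 1)

instance {n : ℕ} (D : Finset (ZMod n)) (σ : St n) (i : ZMod n) :
    Decidable (rel D σ i) := by unfold rel; infer_instance

/-- One synchronous global round of the delay/relay protocol: every process
absorbs the predecessor's queued token, the predecessor's queue is zeroed,
and a process enqueues (at most) one token when its release condition holds;
a delay process resets its counter to `C` upon release and otherwise
decrements it when positive. -/
def roundFn {n : ℕ} (D : Finset (ZMod n)) (C : ℕ) (σ : St n) : St n where
  r := fun i => σ.r i + σ.q (i - 1) - (if rel D σ i then 1 else 0)
  q := fun i => if rel D σ i then 1 else 0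
  c := fun i => if i ∈ D then (if rel D σ i then C else σ.c i - 1) else σ.c i

/-- The total number of tokens `Σᵢ (rᵢ + qᵢ)` is invariant under one global
round of the delay/relay protocol. -/
theorem stmt_1 (n : ℕ) [NeZero n] (D : Finset (ZMod n)) (C : ℕ) (σ : St n) :
    ∑ i : ZMod n, ((roundFn D C σ).r i + (roundFn D C σ).q i) =
      ∑ i : ZMod n, (σ.r i + σ.q i) := by
  have h : ∀ i, (roundFn D C σ).r i + (roundFn D C σ).q i = σ.r i + σ.q (i - 1) := by
    intro i
    simp only [roundFn]
    by_cases hr : rel D σ i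
    · have hpos : 0 < σ.r i + σ.q (i - 1) := by
        unfold rel at hr
        split at hr
        · exact hr.2
        · exact hr
      simp only [hr, if_pos]
      omega
    · simp [hr]
  simp only [h, Finset.sum_add_distrib]
  congr 1
  exact Fintype.sum_equiv (Equiv.subRight 1) _ _ (fun i => rfl)
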